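/- For Q = (1/3)eeᵀ - I ∈ S³ and c = 0: the minimum of q(x) = (1/2)xᵀQx over [0,1]³ equals -1/3, while ℓ_R((1/2,1/2,1/2)) = -1/2. Hence the RLT relaxation of this instance is inexact. -/
import Mathlib


open Matrix Finset

/-- The piecewise-linear RLT underestimator ℓ_R. -/
noncomputable def ellR {n : ℕ} (Q : Matrix (Fin n) (Fin n) ℝ) (c : Fin n → ℝ)
    (x : Fin n → ℝ) : ℝ :=
  (1/2) * (∑ i, ∑ j,
      ((if 0 < Q i j then Q i j * max 0 (x i + x j - 1) else 0) +
       (if Q i j < 0 then Q i j * min (x i) (x j) else 0))) +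
    ∑ i, c i * x i

theorem stmt_16 (Q : Matrix (Fin 3) (Fin 3) ℝ)
    (hQ : Q = ((3 : ℝ)⁻¹) • Matrix.vecMulVec 1 1 - 1) :
    IsLeast ((fun x => (1/2) * (x ⬝ᵥ (Q *ᵥ x))) '' Set.Icc (0 : Fin 3 → ℝ) 1) (-1/3) ∧
    ellR Q 0 (fun _ => (1 : ℝ)/2) = -1/2 ∧
    (-1/2 : ℝ) < -1/3 := by
  subst hQ
  refine ⟨⟨⟨![1,1,0], ?_, ?_⟩, ?_⟩, ?_, by norm_num⟩
  · constructor <;> intro i <;> fin_cases i <;> norm_num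
  · simp [dotProduct, Matrix.mulVec, Fin.sum_univ_three, Matrix.vecMulVec_apply,
      Matrix.one_apply, Matrix.sub_apply, Matrix.smul_apply]
    norm_num
  · rintro y ⟨x, ⟨hx0, hx1⟩, rfl⟩
    have h0 := hx0 0; have h1 := hx0 1; have h2 := hx0 2
    have g0 := hx1 0; have g1 := hx1 1; have g2 := hx1 2
    simp only [Pi.zero_apply, Pi.one_apply] at h0 h1 h2 g0 g1 g2
    simp only [dotProduct, Matrix.mulVec, Fin.sum_univ_three, Matrix.vecMulVec_apply,
      Matrix.one_apply, Matrix.sub_apply, Matrix.smul_apply, Pi.one_apply]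
    norm_num [Fin.ext_iff]
    nlinarith [sq_nonneg (x 0 - x 1), sq_nonneg (x 1 - x 2), sq_nonneg (x 0 - x 2),
      mul_nonneg (mul_nonneg h0 h1) h2,
      mul_nonneg h0 h1, mul_nonneg h1 h2, mul_nonneg h0 h2,
      mul_nonneg (sub_nonneg.2 g0) (sub_nonneg.2 g1),
      mul_nonneg (sub_nonneg.2 g1) (sub_nonneg.2 g2),
      mul_nonneg (sub_nonneg.2 g0) (sub_nonneg.2 g2)]
  · simp [ellR, Fin.sum_univ_three, Matrix.vecMulVec_apply, Matrix.one_apply,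
      Matrix.sub_apply, Matrix.smul_apply]
    norm_num
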